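/- Let X be a compact metrizable space with a Borel probability measure ν, let (G, d) be a metric space with d ≤ 1, let H ⊆ G be a subset, and let H_n ⊆ G be subsets such that for every h ∈ H there exist h_n ∈ H_n with d(h_n, h) → 0. Then for every Borel map f : X → H there exist Borel maps f_n : X → G with f_n(X) ⊆ H_n for each n and ∫_X d(f(x), f_n(x)) dν(x) → 0, provided H (as a subspace of G) is separable and f has relatively compact range after restriction to sets of measure close to 1 (e.g., if G is locally compact second countable). -/

import Mathlib

open MeasureTheory Filter
open scoped ENNReal

/-- Lusin-type approximation: if every point of `H` is a limit of points of `H_n`, then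
every Borel map into `H` is approximated in the integral metric by Borel maps into `H_n`. -/
theorem lusin_approximation_claim {X G : Type*} [TopologicalSpace X] [CompactSpace X]
    [TopologicalSpace.MetrizableSpace X] [MeasurableSpace X] [BorelSpace X]
    (ν : Measure X) [IsProbabilityMeasure ν]
    [MetricSpace G] [LocallyCompactSpace G] [SecondCountableTopology G]
    [MeasurableSpace G] [BorelSpace G]
    (hd1 : ∀ a b : G, dist a b ≤ 1)
    (H : Set G) (Hn : ℕ → Set G)
    (happrox : ∀ h ∈ H, ∃ hn : ℕ → G, (∀ n, hn n ∈ Hn n) ∧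
      Tendsto (fun n => dist (hn n) h) atTop (nhds 0))
    (f : X → G) (hf : Measurable f) (hrange : ∀ x, f x ∈ H) :
    ∃ fn : ℕ → X → G, (∀ n, Measurable (fn n) ∧ ∀ x, fn n x ∈ Hn n) ∧
      Tendsto (fun n => ∫ x, dist (f x) (fn n x) ∂ν) atTop (nhds 0) := by
  classical
  -- `X` is nonempty (it carries a probability measure), hence `H` is nonempty.
  have hXne : Nonempty X := by
    by_contra h
    rw [not_nonempty_iff] at h
    have h1 : ν Set.univ = 1 := measure_univ
    rw [Set.univ_eq_empty_iff.mpr h, measure_empty] at h1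
    exact zero_ne_one h1
  obtain ⟨x0⟩ := hXne
  haveI : Nonempty H := ⟨⟨f x0, hrange x0⟩⟩
  -- A dense sequence in `H`.
  obtain ⟨u, hu⟩ := TopologicalSpace.exists_dense_seq H
  set d : ℕ → G := fun k => (u k : G) with hd
  have hdH : ∀ k, d k ∈ H := fun k => (u k).2
  have hdense : ∀ (x : X), ∀ δ > (0 : ℝ), ∃ k, dist (f x) (d k) < δ := by
    intro x δ hδ
    obtain ⟨k, hk⟩ := Metric.denseRange_iff.1 hu ⟨f x, hrange x⟩ δ hδ
    rw [Subtype.dist_eq] at hk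
    exact ⟨k, hk⟩
  -- Approximating sequences for every `d k`.
  choose s hs1 hs2 using fun k => happrox (d k) (hdH k)
  -- Key step: for every `ε > 0`, eventually in `n` there is a good approximation of `f`.
  have key : ∀ ε > (0 : ℝ), ∀ᶠ n in atTop, ∃ g : X → G, Measurable g ∧
      (∀ x, g x ∈ Hn n) ∧ ∫ x, dist (f x) (g x) ∂ν ≤ ε := by
    intro ε hε
    set δ : ℝ := ε / 3 with hδdef
    have hδ : 0 < δ := by positivity
    set B : ℕ → Set X := fun k => {x | dist (f x) (d k) < δ} with hB
    have hBm : ∀ k, MeasurableSet (B k) :=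
      fun k => measurableSet_lt (hf.dist measurable_const) measurable_const
    set A : ℕ → Set X := fun K => ⋃ k ∈ Finset.range K, B k with hA
    have hAm : ∀ K, MeasurableSet (A K) := fun K => (Finset.range K).measurableSet_biUnion
      (fun k _ => hBm k)
    have hAmono : Monotone A := by
      intro i j hij
      exact Set.biUnion_subset_biUnion_left
        (Finset.coe_subset.mpr (Finset.range_subset_range.mpr hij))
    have hAunion : (⋃ K, A K) = Set.univ := by
      ext x
      simp only [Set.mem_iUnion, Set.mem_univ, iff_true]
      obtain ⟨k, hk⟩ := hdense x δ hδ
      exact ⟨k + 1, Set.mem_biUnion (Finset.self_mem_range_succ k) hk⟩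
    have htend : Tendsto (fun K => ν (A K)) atTop (nhds 1) := by
      have := tendsto_measure_iUnion_atTop (μ := ν) hAmono
      rwa [hAunion, measure_univ] at this
    set δ' : ℝ≥0∞ := ENNReal.ofReal δ with hδ'
    have hδ'0 : δ' ≠ 0 := (ENNReal.ofReal_pos.mpr hδ).ne'
    have hlt : (1 : ℝ≥0∞) - δ' < 1 := ENNReal.sub_lt_self ENNReal.one_ne_top one_ne_zero hδ'0
    obtain ⟨K, hK⟩ := (htend.eventually (eventually_gt_nhds hlt)).exists
    -- the measure of the complement of `A K` is at most `δ'`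
    have hcompl : ν (A K)ᶜ ≤ δ' := by
      have h1 : ν (A K)ᶜ = 1 - ν (A K) := by
        rw [measure_compl (hAm K) (measure_ne_top ν _), measure_univ]
      rw [h1, tsub_le_iff_right]
      calc (1 : ℝ≥0∞) ≤ (1 - δ') + δ' := le_tsub_add
        _ ≤ ν (A K) + δ' := add_le_add hK.le le_rfl
        _ = δ' + ν (A K) := add_comm _ _
    -- the measurable classification map `c`
    set p : ℕ → X → Prop := fun k x => dist (f x) (d k) < δ ∨ k = K with hp
    have hex : ∀ x, ∃ k, p k x := fun x => ⟨K, Or.inr rfl⟩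
    have hpm : ∀ k, MeasurableSet {x | p k x} := by
      intro k
      by_cases hk : k = K
      · have h : {x | p k x} = Set.univ := by ext x; simp [hp, hk]
        rw [h]; exact MeasurableSet.univ
      · have h : {x | p k x} = B k := by ext x; simp [hp, hB, hk]
        rw [h]; exact hBm k
    set c : X → ℕ := fun x => Nat.find (hex x) with hc
    have hcm : Measurable c := measurable_find hex hpm
    have hcK : ∀ x, c x ≤ K := fun x => Nat.find_le (Or.inr rfl)
    have hgood : ∀ x, c x < K → dist (f x) (d (c x)) < δ := by
      intro x hx
      rcases Nat.find_spec (hex x) with h | h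
      · exact h
      · have hcx : c x = K := h
        omega
    set Bad : Set X := {x | ¬ c x < K} with hBad
    have hBadm : MeasurableSet Bad := (hcm (measurableSet_Iio (a := K))).compl
    have hBadsub : Bad ⊆ (A K)ᶜ := by
      intro x hx hxA
      simp only [hA, Set.mem_iUnion] at hxA
      obtain ⟨k, hk, hxk⟩ := hxA
      have : c x ≤ k := Nat.find_le (Or.inl hxk)
      simp only [Finset.mem_range] at hk
      exact hx (lt_of_le_of_lt this hk)
    have hBadν : ν Bad ≤ δ' := le_trans (measure_mono hBadsub) hcompl
    -- a uniform `N` for the approximations of `d 0, …, d (K-1)` within `δ`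
    have hev : ∀ᶠ n in atTop, ∀ k ∈ Finset.range K, dist (s k n) (d k) < δ := by
      rw [eventually_all_finset]
      intro k _
      exact (hs2 k).eventually (eventually_lt_nhds hδ)
    filter_upwards [hev] with n hn
    -- the approximating function
    set c' : X → ℕ := fun x => if c x < K then c x else 0 with hc'
    have hc'm : Measurable c' := by
      have : c' = (fun k => if k < K then k else 0) ∘ c := rfl
      rw [this]
      exact (measurable_from_top).comp hcm
    have hgm' : Measurable fun x => s (c' x) n :=
      (measurable_from_top (f := fun k : ℕ => s k n)).comp hc'm
    refine ⟨fun x => s (c' x) n, hgm', fun x => hs1 _ n, ?_⟩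
    -- pointwise estimate
    have hpt : ∀ x, dist (f x) (s (c' x) n) ≤ 2 * δ + Bad.indicator (fun _ => (1 : ℝ)) x := by
      intro x
      by_cases hx : c x < K
      · have h1 : dist (f x) (d (c x)) < δ := hgood x hx
        have h2 : dist (s (c x) n) (d (c x)) < δ := hn (c x) (Finset.mem_range.mpr hx)
        have hxc' : c' x = c x := if_pos hx
        have hind : Bad.indicator (fun _ => (1 : ℝ)) x = 0 :=
          Set.indicator_of_notMem (by simpa [hBad] using hx) _
        rw [hxc', hind]
        calc dist (f x) (s (c x) n) ≤ dist (f x) (d (c x)) + dist (d (c x)) (s (c x) n) :=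
              dist_triangle _ _ _
          _ = dist (f x) (d (c x)) + dist (s (c x) n) (d (c x)) := by rw [dist_comm (d (c x))]
          _ ≤ δ + δ := add_le_add h1.le h2.le
          _ = 2 * δ + 0 := by ring
      · have hind : Bad.indicator (fun _ => (1 : ℝ)) x = 1 :=
          Set.indicator_of_mem (by simpa [hBad] using hx) _
        rw [hind]
        have := hd1 (f x) (s (c' x) n)
        nlinarith [hδ.le]
    -- integrability
    have hgm : Measurable fun x => dist (f x) (s (c' x) n) :=
      hf.dist hgm'
    have hint1 : Integrable (fun x => dist (f x) (s (c' x) n)) ν := by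
      refine Integrable.mono' (integrable_const (1 : ℝ)) hgm.aestronglyMeasurable ?_
      filter_upwards with x
      rw [Real.norm_eq_abs, abs_of_nonneg dist_nonneg]
      exact hd1 _ _
    have hint2 : Integrable (fun x => 2 * δ + Bad.indicator (fun _ => (1 : ℝ)) x) ν :=
      (integrable_const _).add ((integrable_const (1 : ℝ)).indicator hBadm)
    calc ∫ x, dist (f x) (s (c' x) n) ∂ν
        ≤ ∫ x, (2 * δ + Bad.indicator (fun _ => (1 : ℝ)) x) ∂ν :=
          integral_mono hint1 hint2 hpt
      _ = 2 * δ + (ν Bad).toReal := by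
          rw [integral_add (integrable_const _) ((integrable_const (1 : ℝ)).indicator hBadm),
            integral_const, integral_indicator_const _ hBadm]
          simp [Measure.real]
      _ ≤ 2 * δ + δ := by
          have : (ν Bad).toReal ≤ δ := ENNReal.toReal_le_of_le_ofReal hδ.le hBadν
          linarith
      _ = ε := by rw [hδdef]; ring
  -- Assemble the sequence via near-infima.
  set R : ℕ → Set ℝ := fun n => {r : ℝ | ∃ g : X → G, Measurable g ∧ (∀ x, g x ∈ Hn n) ∧
    ∫ x, dist (f x) (g x) ∂ν = r} with hR
  have hRne : ∀ n, (R n).Nonempty := fun n =>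
    ⟨_, fun _ => s 0 n, measurable_const, fun _ => hs1 0 n, rfl⟩
  have hRbdd : ∀ n, BddBelow (R n) := by
    intro n
    refine ⟨0, fun r hr => ?_⟩
    obtain ⟨g, -, -, hg⟩ := hr
    rw [← hg]
    exact integral_nonneg fun x => dist_nonneg
  set a : ℕ → ℝ := fun n => sInf (R n) with ha
  have ha0 : ∀ n, 0 ≤ a n := fun n => le_csInf (hRne n) fun r hr => by
    obtain ⟨g, -, -, hg⟩ := hr
    rw [← hg]
    exact integral_nonneg fun x => dist_nonneg
  have haT : Tendsto a atTop (nhds 0) := by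
    rw [tendsto_order]
    constructor
    · intro b hb
      exact Eventually.of_forall fun n => lt_of_lt_of_le hb (ha0 n)
    · intro b hb
      filter_upwards [key (b / 2) (by positivity)] with n hn
      obtain ⟨g, hg1, hg2, hg3⟩ := hn
      have : a n ≤ b / 2 :=
        le_trans (csInf_le (hRbdd n) ⟨g, hg1, hg2, rfl⟩) hg3
      linarith
  have hpick : ∀ n, ∃ g : X → G, Measurable g ∧ (∀ x, g x ∈ Hn n) ∧
      ∫ x, dist (f x) (g x) ∂ν < a n + 1 / (n + 1) := by
    intro n
    have h1 : a n < a n + 1 / (n + 1) := by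
      have : (0 : ℝ) < 1 / (n + 1) := by positivity
      linarith
    obtain ⟨r, hr, hrlt⟩ := exists_lt_of_csInf_lt (hRne n) h1
    obtain ⟨g, hg1, hg2, hg3⟩ := hr
    exact ⟨g, hg1, hg2, by rw [hg3]; exact hrlt⟩
  choose fn hfn1 hfn2 hfn3 using hpick
  refine ⟨fn, fun n => ⟨hfn1 n, hfn2 n⟩, ?_⟩
  have hupper : Tendsto (fun n : ℕ => a n + 1 / (n + 1 : ℝ)) atTop (nhds 0) := by
    have h2 : Tendsto (fun n : ℕ => 1 / (n + 1 : ℝ)) atTop (nhds 0) :=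
      tendsto_one_div_add_atTop_nhds_zero_nat
    simpa using haT.add h2
  refine tendsto_of_tendsto_of_tendsto_of_le_of_le haT hupper ?_ ?_
  · intro n
    exact csInf_le (hRbdd n) ⟨fn n, hfn1 n, hfn2 n, rfl⟩
  · exact fun n => (hfn3 n).le
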